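/- arXiv:2604.01009 — 3 statements merged into one kernel-verified Lean document; each statement's English description precedes it below -/
import Mathlib

section
/- Let f ∈ C²([s₀,∞), ℝ) and δ > 0 satisfy f''(s) ≥ δ² f(s) for all s ≥ s₀. Suppose there exists a sequence s̄ₙ ≥ s₀ tending to infinity with f(s̄ₙ) → 0. Then f(s) ≤ f(s₀)·e^{-δ(s-s₀)} for all s ≥ s₀. -/
open Real Filter Set

lemma aux_mono {a : ℝ} {g g' : ℝ → ℝ}
    (hg : ∀ s ∈ Ici a, HasDerivWithinAt g (g' s) (Ici a) s)
    (hg0 : ∀ s ∈ Ici a, 0 ≤ g' s) : MonotoneOn g (Ici a) := by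
  apply monotoneOn_of_hasDerivWithinAt_nonneg (f' := g') (convex_Ici a)
    (fun s hs => (hg s hs).continuousWithinAt)
  · intro x hx
    rw [interior_Ici] at hx ⊢
    exact ((hg x (mem_Ici.2 (le_of_lt hx))).mono Ioi_subset_Ici_self)
  · intro x hx
    rw [interior_Ici] at hx
    exact hg0 x (mem_Ici.2 (le_of_lt hx))

theorem stmt0 (s₀ δ : ℝ) (hδ : 0 < δ) (f f' f'' : ℝ → ℝ)
    (hf' : ∀ s ∈ Ici s₀, HasDerivWithinAt f (f' s) (Ici s₀) s)
    (hf'' : ∀ s ∈ Ici s₀, HasDerivWithinAt f' (f'' s) (Ici s₀) s)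
    (hf''cont : ContinuousOn f'' (Ici s₀))
    (hineq : ∀ s ∈ Ici s₀, δ ^ 2 * f s ≤ f'' s)
    (sbar : ℕ → ℝ) (hsbar : ∀ n, s₀ ≤ sbar n)
    (hsbartop : Tendsto sbar atTop atTop)
    (hfsbar : Tendsto (fun n => f (sbar n)) atTop (nhds 0)) :
    ∀ s ∈ Ici s₀, f s ≤ f s₀ * Real.exp (-δ * (s - s₀)) := by
  -- derivative of exp (c * (s - s₀))
  have hE : ∀ (c : ℝ) (s : ℝ), HasDerivAt (fun x => Real.exp (c * (x - s₀)))
      (Real.exp (c * (s - s₀)) * c) s := by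
    intro c s
    simpa using (((hasDerivAt_id s).sub_const s₀).const_mul c).exp
  set V : ℝ → ℝ := fun s => (f' s + δ * f s) * Real.exp (-δ * (s - s₀)) with hV
  have hVd : ∀ s ∈ Ici s₀, HasDerivWithinAt V
      ((f'' s + δ * f' s) * Real.exp (-δ * (s - s₀))
        + (f' s + δ * f s) * (Real.exp (-δ * (s - s₀)) * (-δ))) (Ici s₀) s := by
    intro s hs
    exact ((hf'' s hs).add ((hf' s hs).const_mul δ)).mul ((hE (-δ) s).hasDerivWithinAt)
  have hVmono : MonotoneOn V (Ici s₀) := by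
    apply aux_mono hVd
    intro s hs
    have h1 := hineq s hs
    have h2 := Real.exp_pos (-δ * (s - s₀))
    nlinarith [mul_le_mul_of_nonneg_right h1 h2.le]
  by_cases hVle : ∀ s ∈ Ici s₀, V s ≤ 0
  · -- w = f * exp(δ(s-s₀)) is antitone
    have hwd : ∀ s ∈ Ici s₀, HasDerivWithinAt (fun s => -(f s * Real.exp (δ * (s - s₀))))
        (-(f' s * Real.exp (δ * (s - s₀)) + f s * (Real.exp (δ * (s - s₀)) * δ)))
        (Ici s₀) s := by
      intro s hs
      exact (((hf' s hs).mul ((hE δ s).hasDerivWithinAt))).neg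
    have hwmono : MonotoneOn (fun s => -(f s * Real.exp (δ * (s - s₀)))) (Ici s₀) := by
      apply aux_mono hwd
      intro s hs
      have h1 : (f' s + δ * f s) * Real.exp (-δ * (s - s₀)) ≤ 0 := hVle s hs
      have h2 := Real.exp_pos (-δ * (s - s₀))
      have h3 := Real.exp_pos (δ * (s - s₀))
      have key : f' s + δ * f s ≤ 0 := by
        by_contra hcon
        push_neg at hcon
        nlinarith
      nlinarith
    intro s hs
    have := hwmono (self_mem_Ici) hs hs
    simp only [sub_self, mul_zero, Real.exp_zero, mul_one, neg_le_neg_iff] at this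
    -- this : f s * exp (δ * (s - s₀)) ≤ f s₀
    have h4 := Real.exp_pos (-δ * (s - s₀))
    have h5 : Real.exp (δ * (s - s₀)) * Real.exp (-δ * (s - s₀)) = 1 := by
      rw [← Real.exp_add]; ring_nf; exact Real.exp_zero
    have h6 := mul_le_mul_of_nonneg_right this h4.le
    rw [mul_assoc, h5, mul_one] at h6
    exact h6
  · push_neg at hVle
    obtain ⟨t, ht, htpos⟩ := hVle
    set c : ℝ := V t with hc
    exfalso
    -- G s = f s * exp(δ(s-s₀)) - c/(2δ) * exp(2δ(s-s₀)) is monotone on Ici t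
    have hsub : Ici t ⊆ Ici s₀ := Ici_subset_Ici.2 ht
    have hGd : ∀ s ∈ Ici t, HasDerivWithinAt
        (fun s => f s * Real.exp (δ * (s - s₀)) - c / (2 * δ) * Real.exp (2 * δ * (s - s₀)))
        ((f' s * Real.exp (δ * (s - s₀)) + f s * (Real.exp (δ * (s - s₀)) * δ))
          - c / (2 * δ) * (Real.exp (2 * δ * (s - s₀)) * (2 * δ))) (Ici t) s := by
      intro s hs
      exact (((hf' s (hsub hs)).mul ((hE δ s).hasDerivWithinAt)).sub
        (((hE (2 * δ) s).hasDerivWithinAt).const_mul (c / (2 * δ)))).mono hsub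
    have hGmono : MonotoneOn
        (fun s => f s * Real.exp (δ * (s - s₀)) - c / (2 * δ) * Real.exp (2 * δ * (s - s₀)))
        (Ici t) := by
      apply aux_mono hGd
      intro s hs
      have hVs : c ≤ V s := hVmono ht (hsub hs) hs
      have hA := Real.exp_pos (δ * (s - s₀))
      have hB := Real.exp_pos (-δ * (s - s₀))
      have hAB : Real.exp (δ * (s - s₀)) * Real.exp (-δ * (s - s₀)) = 1 := by
        rw [← Real.exp_add]; ring_nf; exact Real.exp_zero
      have hA2 : Real.exp (2 * δ * (s - s₀)) = Real.exp (δ * (s - s₀)) * Real.exp (δ * (s - s₀)) := by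
        rw [← Real.exp_add]; ring_nf
      have hδne : (2 * δ) ≠ 0 := by positivity
      rw [hA2]
      have hcdiv : c / (2 * δ) * (Real.exp (δ * (s - s₀)) * Real.exp (δ * (s - s₀)) * (2 * δ))
          = c * (Real.exp (δ * (s - s₀)) * Real.exp (δ * (s - s₀))) := by
        field_simp
      rw [hcdiv]
      -- from hVs : c ≤ (f' s + δ f s) * exp(-δ(s-s₀)), multiply by A twice
      have step : c * Real.exp (δ * (s - s₀)) ≤ f' s + δ * f s := by
        have := mul_le_mul_of_nonneg_right hVs hA.le
        calc c * Real.exp (δ * (s - s₀)) ≤ (f' s + δ * f s) * Real.exp (-δ * (s - s₀))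
              * Real.exp (δ * (s - s₀)) := this
          _ = f' s + δ * f s := by rw [mul_assoc, mul_comm (Real.exp (-δ * (s - s₀))), hAB, mul_one]
      nlinarith [mul_le_mul_of_nonneg_right step hA.le]
    -- lower bound for f s for s ≥ t
    set Gt : ℝ := f t * Real.exp (δ * (t - s₀)) - c / (2 * δ) * Real.exp (2 * δ * (t - s₀)) with hGt
    have hlow : ∀ s, t ≤ s →
        Gt * Real.exp (-δ * (s - s₀)) + c / (2 * δ) * Real.exp (δ * (s - s₀)) ≤ f s := by
      intro s hsge
      have h' : f t * Real.exp (δ * (t - s₀)) - c / (2 * δ) * Real.exp (2 * δ * (t - s₀))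
          ≤ f s * Real.exp (δ * (s - s₀)) - c / (2 * δ) * Real.exp (2 * δ * (s - s₀)) :=
        hGmono (self_mem_Ici) (mem_Ici.2 hsge) hsge
      have hA := Real.exp_pos (δ * (s - s₀))
      have hB := Real.exp_pos (-δ * (s - s₀))
      have hAB : Real.exp (δ * (s - s₀)) * Real.exp (-δ * (s - s₀)) = 1 := by
        rw [← Real.exp_add]; ring_nf; exact Real.exp_zero
      have hA2 : Real.exp (2 * δ * (s - s₀)) * Real.exp (-δ * (s - s₀))
          = Real.exp (δ * (s - s₀)) := by
        rw [← Real.exp_add]; ring_nf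
      have hmul := mul_le_mul_of_nonneg_right h' hB.le
      rw [sub_mul, sub_mul] at hmul
      have e1 : f s * Real.exp (δ * (s - s₀)) * Real.exp (-δ * (s - s₀)) = f s := by
        rw [mul_assoc, hAB, mul_one]
      have e2 : c / (2 * δ) * Real.exp (2 * δ * (s - s₀)) * Real.exp (-δ * (s - s₀))
          = c / (2 * δ) * Real.exp (δ * (s - s₀)) := by
        rw [mul_assoc, hA2]
      rw [hGt, sub_mul]
      linarith
    -- RHS tends to atTop along sbar
    have hdtop : Tendsto (fun n => δ * (sbar n - s₀)) atTop atTop := by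
      apply Tendsto.const_mul_atTop hδ
      exact tendsto_atTop_add_const_right atTop (-s₀) hsbartop |>.congr (fun n => by ring)
    have h1 : Tendsto (fun n => Gt * Real.exp (-δ * (sbar n - s₀))) atTop (nhds 0) := by
      have : Tendsto (fun n => Real.exp (-(δ * (sbar n - s₀)))) atTop (nhds 0) :=
        Real.tendsto_exp_neg_atTop_nhds_zero.comp hdtop
      have h0 := this.const_mul Gt
      rw [mul_zero] at h0
      exact h0.congr (fun n => by ring_nf)
    have h2 : Tendsto (fun n => c / (2 * δ) * Real.exp (δ * (sbar n - s₀))) atTop atTop := by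
      apply Tendsto.const_mul_atTop (by positivity : (0:ℝ) < c / (2 * δ))
      exact Real.tendsto_exp_atTop.comp hdtop
    have hsum : Tendsto (fun n => Gt * Real.exp (-δ * (sbar n - s₀))
        + c / (2 * δ) * Real.exp (δ * (sbar n - s₀))) atTop atTop := h1.add_atTop h2
    have hftop : Tendsto (fun n => f (sbar n)) atTop atTop := by
      apply tendsto_atTop_mono' atTop _ hsum
      filter_upwards [hsbartop.eventually_ge_atTop t] with n hn
      exact hlow (sbar n) hn
    exact not_tendsto_atTop_of_tendsto_nhds hfsbar hftop
end

section
/- Let γ : I → M be a gradient flow line on an unbounded closed interval I = [a,∞), i.e. f∘γ ∈ C¹ with (f∘γ)' = G∘γ ≥ 0. Suppose there exist b > a with ε := f(γ(b)) − f(γ(a)) > 0, a sequence sₙ → ∞, and a continuous curve γ̄ : I → M such that γ(·+sₙ) → γ̄ pointwise on I. Suppose further ε' := f(γ̄(b)) − f(γ̄(a)) > 0. Then the total energy ∫_a^∞ G(γ(s)) ds is infinite, i.e. for every k₀ ∈ ℕ one can find disjoint intervals [a+s_{n_k}, b+s_{n_k}], k=1,…,k₀, each contributing at least ε'/2 to the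 energy, so E(γ) ≥ k₀·ε'/2. -/
open Set Filter Topology MeasureTheory
open scoped ENNReal

theorem stmt6 {M : Type*} [TopologicalSpace M]
    (f G : M → ℝ) (hf : Continuous f) (hG : Continuous G) (hGnn : ∀ x, 0 ≤ G x)
    (a : ℝ) (γ : ℝ → M) (hγ : ContinuousOn γ (Ici a))
    (hflow : ∀ s ∈ Ici a, HasDerivWithinAt (f ∘ γ) (G (γ s)) (Ici a) s)
    (b : ℝ) (hb : a < b)
    (ε : ℝ) (hε : ε = f (γ b) - f (γ a)) (hεpos : 0 < ε)
    (sseq : ℕ → ℝ) (hs0 : ∀ n, 0 ≤ sseq n) (hstop : Tendsto sseq atTop atTop)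
    (γbar : ℝ → M) (hγbarcont : ContinuousOn γbar (Ici a))
    (hconv : ∀ s ∈ Ici a, Tendsto (fun n => γ (s + sseq n)) atTop (𝓝 (γbar s)))
    (ε' : ℝ) (hε' : ε' = f (γbar b) - f (γbar a)) (hε'pos : 0 < ε') :
    ∀ k₀ : ℕ, ∃ n : Fin k₀ → ℕ,
      (∀ i j : Fin k₀, i < j → b + sseq (n i) < a + sseq (n j)) ∧
      (∀ i : Fin k₀, ENNReal.ofReal (ε' / 2)
          ≤ ∫⁻ s in Icc (a + sseq (n i)) (b + sseq (n i)), ENNReal.ofReal (G (γ s))) ∧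
      (k₀ : ℝ≥0∞) * ENNReal.ofReal (ε' / 2)
        ≤ ∫⁻ s in Ici a, ENNReal.ofReal (G (γ s)) := by
  intro k₀
  have hab : a ∈ Ici a := le_refl a
  have hbb : b ∈ Ici a := le_of_lt hb
  -- Key: energy over Icc (a+s) (b+s) equals f(γ(b+s)) - f(γ(a+s))
  have key : ∀ s : ℝ, 0 ≤ s →
      ∫⁻ t in Icc (a + s) (b + s), ENNReal.ofReal (G (γ t))
        = ENNReal.ofReal (f (γ (b + s)) - f (γ (a + s))) := by
    intro s hs
    have hpq : a + s ≤ b + s := by linarith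
    have hsub : Icc (a + s) (b + s) ⊆ Ici a := fun t ht => by
      simp only [mem_Icc] at ht; simp only [mem_Ici]; linarith [ht.1]
    have hcont : ContinuousOn (f ∘ γ) (Icc (a + s) (b + s)) :=
      (hf.comp_continuousOn hγ).mono hsub
    have hGcont : ContinuousOn (fun t => G (γ t)) (Icc (a + s) (b + s)) :=
      (hG.comp_continuousOn hγ).mono hsub
    have hint : IntervalIntegrable (fun t => G (γ t)) volume (a + s) (b + s) :=
      hGcont.intervalIntegrable_of_Icc hpq
    have hftc : ∫ t in (a + s)..(b + s), G (γ t) = f (γ (b + s)) - f (γ (a + s)) := by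
      have := intervalIntegral.integral_eq_sub_of_hasDeriv_right_of_le hpq hcont
        (fun t ht => by
          refine (hflow t ?_).mono (Ioi_subset_Ici ?_)
          · exact le_trans (by linarith) ht.1.le
          · exact le_trans (by linarith) ht.1.le) hint
      simpa using this
    have hioc : ∫⁻ t in Ioc (a + s) (b + s), ENNReal.ofReal (G (γ t))
        = ENNReal.ofReal (f (γ (b + s)) - f (γ (a + s))) := by
      rw [← hftc, intervalIntegral.integral_of_le hpq]
      rw [← ofReal_integral_eq_lintegral_ofReal]
      · exact hGcont.integrableOn_Icc.mono_set Ioc_subset_Icc_self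
      · exact Eventually.of_forall fun t => hGnn (γ t)
    rw [← hioc]
    exact setLIntegral_congr Ioc_ae_eq_Icc.symm
  -- convergence of differences
  have htend : Tendsto (fun n => f (γ (b + sseq n)) - f (γ (a + sseq n))) atTop
      (𝓝 ε') := by
    rw [hε']
    exact ((hf.tendsto _).comp (hconv b hbb)).sub ((hf.tendsto _).comp (hconv a hab))
  have hev : ∀ᶠ n in atTop, ε' / 2 ≤ f (γ (b + sseq n)) - f (γ (a + sseq n)) :=
    htend.eventually (eventually_ge_nhds (half_lt_self hε'pos))
  obtain ⟨N0, hN0⟩ := eventually_atTop.mp hev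
  -- choice of large indices
  have hNbig : ∀ C : ℝ, ∃ N, N0 ≤ N ∧ C < sseq N := by
    intro C
    obtain ⟨N, h1, h2⟩ := ((eventually_ge_atTop N0).and (hstop.eventually_gt_atTop C)).exists
    exact ⟨N, h1, h2⟩
  let m : ℕ → ℕ := fun k => Nat.rec (hNbig 0).choose
    (fun _ prev => (hNbig (b - a + sseq prev)).choose) k
  have hmN0 : ∀ k, N0 ≤ m k := by
    intro k
    cases k with
    | zero => exact (hNbig 0).choose_spec.1
    | succ j => exact (hNbig (b - a + sseq (m j))).choose_spec.1
  have hmstep : ∀ k, b + sseq (m k) < a + sseq (m (k + 1)) := by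
    intro k
    have := (hNbig (b - a + sseq (m k))).choose_spec.2
    have : b - a + sseq (m k) < sseq (m (k + 1)) := this
    linarith
  have hmono : StrictMono (fun k => a + sseq (m k)) := by
    apply strictMono_nat_of_lt_succ
    intro k
    have := hmstep k
    linarith
  have horder : ∀ i j : ℕ, i < j → b + sseq (m i) < a + sseq (m j) := by
    intro i j hij
    calc b + sseq (m i) < a + sseq (m (i + 1)) := hmstep i
      _ ≤ a + sseq (m j) := hmono.monotone hij
  refine ⟨fun i => m i, fun i j hij => horder i j hij, ?_, ?_⟩
  · intro i
    rw [key (sseq (m i)) (hs0 _)]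
    exact ENNReal.ofReal_le_ofReal (hN0 (m i) (hmN0 i))
  · -- sum over disjoint intervals
    set A : Fin k₀ → Set ℝ := fun i => Icc (a + sseq (m i)) (b + sseq (m i)) with hA
    have hmeas : ∀ i, MeasurableSet (A i) := fun i => measurableSet_Icc
    have hdisj : Pairwise (Function.onFun Disjoint A) := by
      intro i j hij
      rcases lt_or_gt_of_ne hij with h | h
      all_goals simp only [Function.onFun]
      · rw [Set.disjoint_left]
        intro x hx hx'
        simp only [hA, mem_Icc] at hx hx'
        have := horder i j h
        linarith [hx.2, hx'.1]
      · rw [Set.disjoint_right]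
        intro x hx hx'
        simp only [hA, mem_Icc] at hx hx'
        have := horder j i h
        linarith [hx'.2, hx.1]
    have hsub : (⋃ i, A i) ⊆ Ici a := by
      apply iUnion_subset
      intro i t ht
      simp only [hA, mem_Icc] at ht
      simp only [mem_Ici]
      have := hs0 (m i)
      linarith [ht.1]
    calc (k₀ : ℝ≥0∞) * ENNReal.ofReal (ε' / 2)
        = ∑ i : Fin k₀, ENNReal.ofReal (ε' / 2) := by
          simp [Finset.sum_const, nsmul_eq_mul]
      _ ≤ ∑ i : Fin k₀, ∫⁻ t in A i, ENNReal.ofReal (G (γ t)) := by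
          apply Finset.sum_le_sum
          intro i _
          rw [hA, key (sseq (m i)) (hs0 _)]
          exact ENNReal.ofReal_le_ofReal (hN0 (m i) (hmN0 i))
      _ = ∑' i : Fin k₀, ∫⁻ t in A i, ENNReal.ofReal (G (γ t)) := (tsum_fintype _).symm
      _ = ∫⁻ t in ⋃ i, A i, ENNReal.ofReal (G (γ t)) :=
          (lintegral_iUnion hmeas hdisj _).symm
      _ ≤ ∫⁻ t in Ici a, ENNReal.ofReal (G (γ t)) := lintegral_mono_set hsub
end

section
/- Let γ : [a,∞) → M be a gradient flow line (f∘γ ∈ C¹, (f∘γ)' = G∘γ with G ≥ 0 continuous) of finite energy E(γ) = ∫_a^∞ G∘γ < ∞, and suppose sₙ → ∞ and γ(·+sₙ)|_{[a,∞)} converges pointwise to a gradient flow line γ̄ : [a,∞) → M. Then f ∘ γ̄ is constant on [a,∞), and consequently γ̄([a,∞)) ⊆ G⁻¹(0). -/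
open Set Filter Topology MeasureTheory

theorem stmt7 {M : Type*} [TopologicalSpace M] [TopologicalSpace.MetrizableSpace M]
    (f G : M → ℝ) (hf : Continuous f) (hG : Continuous G) (hGnn : ∀ x, 0 ≤ G x)
    (a : ℝ) (γ : ℝ → M) (hγ : ContinuousOn γ (Ici a))
    (hflow : ∀ s ∈ Ici a, HasDerivWithinAt (f ∘ γ) (G (γ s)) (Ici a) s)
    (hint : IntegrableOn (fun s => G (γ s)) (Ici a))
    (sseq : ℕ → ℝ) (hs0 : ∀ n, 0 ≤ sseq n) (hstop : Tendsto sseq atTop atTop)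
    (γbar : ℝ → M) (hγbarcont : ContinuousOn γbar (Ici a))
    (hbarflow : ∀ s ∈ Ici a, HasDerivWithinAt (f ∘ γbar) (G (γbar s)) (Ici a) s)
    (hconv : ∀ s ∈ Ici a, Tendsto (fun n => γ (s + sseq n)) atTop (𝓝 (γbar s))) :
    (∀ s ∈ Ici a, f (γbar s) = f (γbar a)) ∧ (∀ s ∈ Ici a, G (γbar s) = 0) := by
  set I := ∫ u in Ioi a, G (γ u) with hI
  have hF : ∀ t ∈ Ici a, f (γ t) = f (γ a) + ∫ u in a..t, G (γ u) := by
    intro t ht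
    have key : ∫ u in a..t, G (γ u) = (f ∘ γ) t - (f ∘ γ) a := by
      apply intervalIntegral.integral_eq_sub_of_hasDeriv_right_of_le ht
      · exact (hf.comp_continuousOn hγ).mono (Icc_subset_Ici_self)
      · intro x hx
        exact (hflow x hx.1.le).mono (fun u hu => hx.1.le.trans (le_of_lt hu))
      · rw [intervalIntegrable_iff_integrableOn_Icc_of_le ht]
        exact hint.mono_set Icc_subset_Ici_self
    simp only [Function.comp] at key
    linarith
  have hFlim : Tendsto (fun t => ∫ u in a..t, G (γ u)) atTop (𝓝 I) :=
    MeasureTheory.intervalIntegral_tendsto_integral_Ioi a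
      (hint.mono_set Ioi_subset_Ici_self) tendsto_id
  have hflim : Tendsto (fun t => f (γ t)) atTop (𝓝 (f (γ a) + I)) := by
    have : Tendsto (fun t => f (γ a) + ∫ u in a..t, G (γ u)) atTop (𝓝 (f (γ a) + I)) :=
      tendsto_const_nhds.add hFlim
    refine this.congr' ?_
    filter_upwards [eventually_ge_atTop a] with t ht
    exact (hF t ht).symm
  have hconst : ∀ s ∈ Ici a, f (γbar s) = f (γ a) + I := by
    intro s hs
    have h1 : Tendsto (fun n => s + sseq n) atTop atTop :=
      tendsto_atTop_add_const_left _ s hstop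
    have h2 : Tendsto (fun n => f (γ (s + sseq n))) atTop (𝓝 (f (γ a) + I)) :=
      hflim.comp h1
    have h3 : Tendsto (fun n => f (γ (s + sseq n))) atTop (𝓝 (f (γbar s))) :=
      (hf.tendsto _).comp (hconv s hs)
    exact tendsto_nhds_unique h3 h2
  constructor
  · intro s hs
    rw [hconst s hs, hconst a self_mem_Ici]
  · intro s hs
    have h0 : HasDerivWithinAt (f ∘ γbar) 0 (Ici a) s :=
      (hasDerivWithinAt_const s (Ici a) (f (γ a) + I)).congr
        (fun x hx => hconst x hx) (hconst s hs)
    have hu : UniqueDiffWithinAt ℝ (Ici a) s := uniqueDiffOn_Ici a s hs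
    have e1 := (hbarflow s hs).derivWithin hu
    have e2 := h0.derivWithin hu
    rw [e2] at e1
    exact e1.symm
end
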